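/- Low-degree DAG partition lemma (d'=2 case, simplified): for every finite DAG G with s vertices and maximum in-degree at most d ≥ 2, and every integer b with d ≤ b ≤ s, there exist a subdivision G' of G and a partition P of the vertices of G' such that (1) every part of P has at most b vertices, (2) every vertex of the quotient G'/P has in-degree at most 2, and (3) every directed path in G'/P has fewer than d·s/b edges. -/

import Mathlib

/-- Vertices of a subdivision of a graph on `Fin s`: original vertices (`inl`)
plus subdivision vertices `inr (u, v, k)`, the `k`-th vertex inserted into edge `(u,v)`. -/
def SubdivVert (s : ℕ) := Fin s ⊕ (Fin s × Fin s × ℕ)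

/-- Valid vertices of the subdivision in which edge `(u,v)` is subdivided `n u v` times. -/
def SValid {s : ℕ} (E : Fin s → Fin s → Prop) (n : Fin s → Fin s → ℕ) : SubdivVert s → Prop
  | .inl _ => True
  | .inr (u, v, k) => E u v ∧ k < n u v

/-- Edges of the subdivision: edge `(u,v)` becomes the path
`u → (u,v,0) → (u,v,1) → ⋯ → (u,v,n u v - 1) → v` (a direct edge if `n u v = 0`). -/
def SEdge {s : ℕ} (E : Fin s → Fin s → Prop) (n : Fin s → Fin s → ℕ) :
    SubdivVert s → SubdivVert s → Prop
  | .inl u, .inl v => E u v ∧ n u v = 0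
  | .inl u, .inr (u', v', k) => u' = u ∧ E u' v' ∧ k = 0 ∧ 0 < n u' v'
  | .inr (u', v', k), .inl v => v' = v ∧ E u' v' ∧ k + 1 = n u' v'
  | .inr (u1, v1, k1), .inr (u2, v2, k2) =>
      u2 = u1 ∧ v2 = v1 ∧ E u1 v1 ∧ k2 = k1 + 1 ∧ k2 < n u1 v1

/-- Edges of the quotient of the subdivision by a partition `P`. -/
def QEdge {s : ℕ} (E : Fin s → Fin s → Prop) (n : Fin s → Fin s → ℕ)
    (P : SubdivVert s → ℕ) (i j : ℕ) : Prop :=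
  i ≠ j ∧ ∃ x y, SValid E n x ∧ SValid E n y ∧ SEdge E n x y ∧ P x = i ∧ P y = j

section Construction

open Finset
open scoped Classical

variable {s : ℕ} (d b : ℕ) (E : Fin s → Fin s → Prop)

noncomputable def hgt (v : Fin s) : ℕ :=
  (Finset.univ.filter (fun u => Relation.TransGen E u v)).card

noncomputable def key (v : Fin s) : ℕ := hgt E v * s + v.val

theorem hgt_lt (hacyc : ∀ v, ¬ Relation.TransGen E v v) (u v : Fin s) (h : E u v) :
    hgt E u < hgt E v := by
  apply Finset.card_lt_card
  constructor
  · intro w hw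
    simp only [Finset.mem_filter, Finset.mem_univ, true_and] at hw ⊢
    exact hw.tail h
  · intro hsub
    have hu : u ∈ Finset.univ.filter (fun w => Relation.TransGen E w v) := by
      simp only [Finset.mem_filter, Finset.mem_univ, true_and]
      exact Relation.TransGen.single h
    have := hsub hu
    simp only [Finset.mem_filter, Finset.mem_univ, true_and] at this
    exact absurd this (hacyc u)

theorem key_lt_of_E (hacyc : ∀ v, ¬ Relation.TransGen E v v) (u v : Fin s) (h : E u v) :
    key E u < key E v := by
  have h1 := hgt_lt E hacyc u v h
  have hu : u.val < s := u.isLt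
  have h4 : hgt E u * s + s ≤ hgt E v * s := by
    calc hgt E u * s + s = (hgt E u + 1) * s := by ring
      _ ≤ hgt E v * s := Nat.mul_le_mul_right s h1
  show hgt E u * s + u.val < hgt E v * s + v.val
  omega

theorem key_injective : Function.Injective (key E) := by
  intro u v h
  have hu : u.val < s := u.isLt
  have hv : v.val < s := v.isLt
  have hk : hgt E u * s + u.val = hgt E v * s + v.val := h
  have : hgt E u = hgt E v := by
    by_contra hne
    rcases Nat.lt_or_ge (hgt E u) (hgt E v) with hlt | hge
    · have : hgt E u * s + s ≤ hgt E v * s := by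
        calc hgt E u * s + s = (hgt E u + 1) * s := by ring
          _ ≤ hgt E v * s := Nat.mul_le_mul_right s hlt
      omega
    · have hlt2 : hgt E v < hgt E u := by omega
      have : hgt E v * s + s ≤ hgt E u * s := by
        calc hgt E v * s + s = (hgt E v + 1) * s := by ring
          _ ≤ hgt E u * s := Nat.mul_le_mul_right s hlt2
      omega
  have : u.val = v.val := by
    rw [this] at hk; omega
  exact Fin.ext this

noncomputable def indegF (v : Fin s) : ℕ := (Finset.univ.filter (fun u => E u v)).card

def bta : ℕ := b - d + 1

noncomputable def W (v : Fin s) : ℕ := max (bta d b * indegF E v) b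

def Bcap : ℕ := bta d b * b

noncomputable def sig (v : Fin s) : ℕ :=
  ∑ u ∈ Finset.univ.filter (fun u => key E u ≤ key E v), W d b E u

noncomputable def blk (v : Fin s) : ℕ := (sig d b E v - 1) / Bcap d b

theorem b_le_W (v : Fin s) : b ≤ W d b E v := le_max_right _ _

theorem indegF_le_d (hindeg : ∀ v : Fin s, {u | E u v}.ncard ≤ d) (v : Fin s) :
    indegF E v ≤ d := by
  have h := hindeg v
  have he : {u | E u v} = ↑(Finset.univ.filter (fun u => E u v)) := by ext u; simp
  rw [he, Set.ncard_coe_finset] at h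
  exact h

theorem W_le (hd : 2 ≤ d) (hdb : d ≤ b) (hindeg : ∀ v : Fin s, {u | E u v}.ncard ≤ d)
    (v : Fin s) : W d b E v ≤ bta d b * d := by
  have h1 : indegF E v ≤ d := indegF_le_d d E hindeg v
  have h2 : bta d b * indegF E v ≤ bta d b * d := Nat.mul_le_mul_left _ h1
  have h3 : b ≤ bta d b * d := by
    have h5 : bta d b * d = (b - d) * d + d := by
      show (b - d + 1) * d = (b - d) * d + d; ring
    have h6 : b - d ≤ (b - d) * d := Nat.le_mul_of_pos_right _ (by omega)
    omega
  exact max_le h2 h3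

theorem sig_mono_strict (u v : Fin s) (h : key E u < key E v) :
    sig d b E u + W d b E v ≤ sig d b E v := by
  have hsub : Finset.univ.filter (fun w => key E w ≤ key E u) ⊆
      (Finset.univ.filter (fun w => key E w ≤ key E v)).erase v := by
    intro w hw
    simp only [Finset.mem_filter, Finset.mem_univ, true_and] at hw
    rw [Finset.mem_erase]
    refine ⟨?_, by simp only [Finset.mem_filter, Finset.mem_univ, true_and]; omega⟩
    intro hwv; subst hwv; omega
  have hv : v ∈ Finset.univ.filter (fun w => key E w ≤ key E v) := by simp
  calc sig d b E u + W d b E v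
      ≤ (∑ w ∈ (Finset.univ.filter (fun w => key E w ≤ key E v)).erase v, W d b E w)
        + W d b E v := by
        exact Nat.add_le_add_right (Finset.sum_le_sum_of_subset hsub) _
    _ = sig d b E v := Finset.sum_erase_add _ _ hv

theorem one_le_sig (hb : 1 ≤ b) (v : Fin s) : 1 ≤ sig d b E v := by
  have hv : v ∈ Finset.univ.filter (fun w => key E w ≤ key E v) := by simp
  calc 1 ≤ b := hb
    _ ≤ W d b E v := b_le_W d b E v
    _ ≤ sig d b E v := Finset.single_le_sum (fun _ _ => Nat.zero_le _) hv

theorem sig_le_sig (u v : Fin s) (h : key E u ≤ key E v) : sig d b E u ≤ sig d b E v := by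
  rcases eq_or_lt_of_le h with he | hlt
  · have := key_injective E he; subst this; rfl
  · have h1 := sig_mono_strict d b E u v hlt
    have := b_le_W d b E v
    omega

theorem blk_mono (u v : Fin s) (h : key E u ≤ key E v) : blk d b E u ≤ blk d b E v :=
  Nat.div_le_div_right (by have := sig_le_sig d b E u v h; omega)

theorem blk_le_of_E (hacyc : ∀ v, ¬ Relation.TransGen E v v) (u v : Fin s) (h : E u v) :
    blk d b E u ≤ blk d b E v :=
  blk_mono d b E u v (le_of_lt (key_lt_of_E E hacyc u v h))



noncomputable def Tsum (j : ℕ) : ℕ :=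
  ∑ v ∈ Finset.univ.filter (fun v => blk d b E v < j), W d b E v

noncomputable def classF (ℓ : ℕ) : Finset (Fin s) :=
  Finset.univ.filter (fun v => blk d b E v = ℓ)

noncomputable def FarP (j : ℕ) : Finset (Fin s × Fin s) :=
  Finset.univ.filter (fun p : Fin s × Fin s =>
    E p.1 p.2 ∧ blk d b E p.2 = j ∧ blk d b E p.1 + 2 ≤ j)

noncomputable def Fcnt (j : ℕ) : ℕ := (FarP d b E j).card

noncomputable def Lm1 : ℕ := Finset.univ.sup (blk d b E)

noncomputable def oAux : ℕ → ℕ → ℕ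
  | 0, _ => 0
  | (f+1), j => Fcnt d b E j + oAux f (j+1) - b

noncomputable def oCnt (j : ℕ) : ℕ := oAux d b E (Lm1 d b E + 1 - j) j

theorem blk_le_Lm1 (v : Fin s) : blk d b E v ≤ Lm1 d b E :=
  Finset.le_sup (Finset.mem_univ v)

theorem oCnt_high (j : ℕ) (h : Lm1 d b E < j) : oCnt d b E j = 0 := by
  unfold oCnt
  have : Lm1 d b E + 1 - j = 0 := by omega
  rw [this]; rfl

theorem oCnt_spec (j : ℕ) (h : j ≤ Lm1 d b E) :
    oCnt d b E j = Fcnt d b E j + oCnt d b E (j+1) - b := by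
  unfold oCnt
  have h1 : Lm1 d b E + 1 - j = (Lm1 d b E - j) + 1 := by omega
  have h2 : Lm1 d b E + 1 - (j + 1) = Lm1 d b E - j := by omega
  rw [h1, h2]; rfl

theorem Bcap_pos (hd : 2 ≤ d) (hdb : d ≤ b) : 0 < Bcap d b := by
  have h1 : 1 ≤ bta d b := Nat.le_add_left 1 _
  have h2 : 0 < b := by omega
  exact Nat.mul_pos h1 h2

/-- The prefix sum up to a down-closed block set equals `sig` of its key-max element. -/
theorem Tsum_le (hd : 2 ≤ d) (hdb : d ≤ b) (j : ℕ) : Tsum d b E j ≤ j * Bcap d b := by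
  rcases Finset.eq_empty_or_nonempty (Finset.univ.filter (fun v => blk d b E v < j)) with he | hne
  · unfold Tsum; rw [he]; simp
  · obtain ⟨m, hm, hmax⟩ := Finset.exists_max_image _ (key E) hne
    simp only [Finset.mem_filter, Finset.mem_univ, true_and] at hm
    have hset : Finset.univ.filter (fun v => blk d b E v < j)
        = Finset.univ.filter (fun v => key E v ≤ key E m) := by
      apply Finset.ext
      intro v
      simp only [Finset.mem_filter, Finset.mem_univ, true_and]
      constructor
      · intro hv
        exact hmax v (by simp only [Finset.mem_filter, Finset.mem_univ, true_and]; exact hv)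
      · intro hv
        exact lt_of_le_of_lt (blk_mono d b E v m hv) hm
    have hT : Tsum d b E j = sig d b E m := by
      unfold Tsum sig; rw [hset]
    rw [hT]
    have hblk : (sig d b E m - 1) / Bcap d b < j := hm
    have hB := Bcap_pos d b hd hdb
    have h2 : sig d b E m - 1 < j * Bcap d b := by
      rw [Nat.div_lt_iff_lt_mul hB] at hblk
      exact hblk
    have h3 : 1 ≤ sig d b E m := one_le_sig d b E (by omega) m
    omega

theorem sig_ge_of_blk (hd : 2 ≤ d) (hdb : d ≤ b) (v : Fin s) (j : ℕ) (h : j ≤ blk d b E v) :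
    j * Bcap d b + 1 ≤ sig d b E v := by
  have hB := Bcap_pos d b hd hdb
  have h1 : j * Bcap d b ≤ sig d b E v - 1 := by
    rw [← Nat.le_div_iff_mul_le hB]
    exact h
  have h3 : 1 ≤ sig d b E v := one_le_sig d b E (by omega) v
  omega

theorem Tsum_ge (hd : 2 ≤ d) (hdb : d ≤ b) (hindeg : ∀ v : Fin s, {u | E u v}.ncard ≤ d)
    (j : ℕ) (hex : ∃ v, j ≤ blk d b E v) :
    j * Bcap d b + 1 ≤ Tsum d b E j + bta d b * d := by
  obtain ⟨v0, hv0⟩ := hex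
  have hne : (Finset.univ.filter (fun v => j ≤ blk d b E v)).Nonempty :=
    ⟨v0, by simp only [Finset.mem_filter, Finset.mem_univ, true_and]; exact hv0⟩
  obtain ⟨u, hu, hmin⟩ := Finset.exists_min_image _ (key E) hne
  simp only [Finset.mem_filter, Finset.mem_univ, true_and] at hu
  have hset : Finset.univ.filter (fun w => blk d b E w < j)
      = Finset.univ.filter (fun w => key E w < key E u) := by
    apply Finset.ext
    intro w
    simp only [Finset.mem_filter, Finset.mem_univ, true_and]
    constructor
    · intro hw
      by_contra hc
      push_neg at hc
      have := blk_mono d b E u w hc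
      omega
    · intro hw
      by_contra hc
      push_neg at hc
      have := hmin w (by simp only [Finset.mem_filter, Finset.mem_univ, true_and]; exact hc)
      omega
  have hsig : sig d b E u = Tsum d b E j + W d b E u := by
    unfold sig Tsum
    rw [hset]
    have hsplit : Finset.univ.filter (fun w => key E w ≤ key E u)
        = insert u (Finset.univ.filter (fun w => key E w < key E u)) := by
      apply Finset.ext
      intro w
      simp only [Finset.mem_filter, Finset.mem_univ, true_and, Finset.mem_insert]
      constructor
      · intro hw
        rcases eq_or_lt_of_le hw with he | hlt
        · left; exact key_injective E he
        · right; exact hlt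
      · intro hw
        rcases hw with he | hlt
        · subst he; exact le_refl _
      
        · omega
    rw [hsplit, Finset.sum_insert (by simp)]
    omega
  have h1 := sig_ge_of_blk d b E hd hdb u j hu
  have h2 := W_le d b E hd hdb hindeg u
  omega

theorem blk_window (hd : 2 ≤ d) (hdb : d ≤ b) (v : Fin s) (ℓ : ℕ) (hv : blk d b E v = ℓ) :
    ℓ * Bcap d b ≤ sig d b E v - 1 ∧ sig d b E v - 1 < (ℓ + 1) * Bcap d b := by
  have hv' : (sig d b E v - 1) / Bcap d b = ℓ := hv
  constructor
  · rw [← Nat.le_div_iff_mul_le (Bcap_pos d b hd hdb)]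
    omega
  · rw [← Nat.div_lt_iff_lt_mul (Bcap_pos d b hd hdb)]
    omega

theorem classF_card (hd : 2 ≤ d) (hdb : d ≤ b) (ℓ : ℕ) :
    (classF d b E ℓ).card ≤ bta d b := by
  have hb : 0 < b := by omega
  classical
  have key_lemma : ∀ v ∈ classF d b E ℓ,
      (sig d b E v - 1 - ℓ * Bcap d b) / b < bta d b := by
    intro v hv
    simp only [classF, Finset.mem_filter, Finset.mem_univ, true_and] at hv
    obtain ⟨h2, h1⟩ := blk_window d b E hd hdb v ℓ hv
    rw [Nat.div_lt_iff_lt_mul hb]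
    have hexp : (ℓ + 1) * Bcap d b = ℓ * Bcap d b + bta d b * b := by
      have hBc : Bcap d b = bta d b * b := rfl
      rw [hBc]; ring
    omega
  apply le_trans (Finset.card_le_card_of_injOn
    (fun v => (sig d b E v - 1 - ℓ * Bcap d b) / b)
    (fun v hv => Finset.mem_range.mpr (key_lemma v hv)) ?_) (by simp)
  intro u hu v hv heq
  rw [Finset.mem_coe] at hu hv
  have hequ : (sig d b E u - 1 - ℓ * Bcap d b) / b = (sig d b E v - 1 - ℓ * Bcap d b) / b := heq
  simp only [classF, Finset.mem_filter, Finset.mem_univ, true_and] at hu hv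
  by_contra hne
  have hkne : key E u ≠ key E v := fun h => hne (key_injective E h)
  have hwu := (blk_window d b E hd hdb u ℓ hu).1
  have hwv := (blk_window d b E hd hdb v ℓ hv).1
  have main : ∀ x y : Fin s, key E x < key E y →
      ℓ * Bcap d b ≤ sig d b E x - 1 →
      (sig d b E x - 1 - ℓ * Bcap d b) / b < (sig d b E y - 1 - ℓ * Bcap d b) / b := by
    intro x y hxy hwx
    have hs1 := sig_mono_strict d b E x y hxy
    have hWy := b_le_W d b E y
    have h1 : 1 ≤ sig d b E x := one_le_sig d b E (by omega) x
    have hstep : sig d b E y - 1 - ℓ * Bcap d b ≥ (sig d b E x - 1 - ℓ * Bcap d b) + b := by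
      omega
    calc (sig d b E x - 1 - ℓ * Bcap d b) / b
        < (sig d b E x - 1 - ℓ * Bcap d b) / b + 1 := Nat.lt_succ_self _
      _ = ((sig d b E x - 1 - ℓ * Bcap d b) + b) / b := (Nat.add_div_right _ hb).symm
      _ ≤ (sig d b E y - 1 - ℓ * Bcap d b) / b := Nat.div_le_div_right hstep
  rcases Nat.lt_or_ge (key E u) (key E v) with hlt | hge
  · have := main u v hlt hwu; omega
  · have hlt : key E v < key E u := by omega
    have := main v u hlt hwv; omega

theorem F_T (hd : 2 ≤ d) (hdb : d ≤ b) (j : ℕ) :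
    bta d b * Fcnt d b E j + Tsum d b E j ≤ Tsum d b E (j+1) := by
  classical
  -- Fcnt j ≤ sum of indegrees over class j
  have h1 : Fcnt d b E j ≤ ∑ v ∈ classF d b E j, indegF E v := by
    have hsub : FarP d b E j ⊆ (classF d b E j).biUnion
        (fun v => (Finset.univ.filter (fun u => E u v)).image (fun u => (u, v))) := by
      intro p hp
      simp only [FarP, Finset.mem_filter, Finset.mem_univ, true_and] at hp
      rw [Finset.mem_biUnion]
      refine ⟨p.2, ?_, ?_⟩
      · simp only [classF, Finset.mem_filter, Finset.mem_univ, true_and]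
        exact hp.2.1
      · rw [Finset.mem_image]
        exact ⟨p.1, by simp only [Finset.mem_filter, Finset.mem_univ, true_and]; exact hp.1,
          by simp⟩
    calc Fcnt d b E j ≤ ((classF d b E j).biUnion
        (fun v => (Finset.univ.filter (fun u => E u v)).image (fun u => (u, v)))).card :=
          Finset.card_le_card hsub
      _ ≤ ∑ v ∈ classF d b E j,
          ((Finset.univ.filter (fun u => E u v)).image (fun u => (u, v))).card :=
          Finset.card_biUnion_le
      _ ≤ ∑ v ∈ classF d b E j, indegF E v := by
          apply Finset.sum_le_sum
          intro v _
          exact Finset.card_image_le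
  have h2 : bta d b * Fcnt d b E j ≤ ∑ v ∈ classF d b E j, W d b E v := by
    calc bta d b * Fcnt d b E j ≤ bta d b * ∑ v ∈ classF d b E j, indegF E v :=
          Nat.mul_le_mul_left _ h1
      _ = ∑ v ∈ classF d b E j, bta d b * indegF E v := by rw [Finset.mul_sum]
      _ ≤ ∑ v ∈ classF d b E j, W d b E v := by
          apply Finset.sum_le_sum
          intro v _
          exact le_max_left _ _
  have h3 : Tsum d b E (j+1) = Tsum d b E j + ∑ v ∈ classF d b E j, W d b E v := by
    unfold Tsum
    have hsplit : Finset.univ.filter (fun v => blk d b E v < j + 1)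
        = (Finset.univ.filter (fun v => blk d b E v < j)) ∪ classF d b E j := by
      apply Finset.ext
      intro v
      simp only [Finset.mem_union, classF, Finset.mem_filter, Finset.mem_univ, true_and]
      omega
    have hdisj : Disjoint (Finset.univ.filter (fun v => blk d b E v < j)) (classF d b E j) := by
      rw [Finset.disjoint_left]
      intro v hv hv2
      simp only [Finset.mem_filter, Finset.mem_univ, true_and] at hv
      simp only [classF, Finset.mem_filter, Finset.mem_univ, true_and] at hv2
      omega
    rw [hsplit, Finset.sum_union hdisj]
  omega

theorem o_tel (hd : 2 ≤ d) (hdb : d ≤ b) (j : ℕ) :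
    bta d b * oCnt d b E j + Tsum d b E j ≤ j * Bcap d b := by
  have main : ∀ m j, Lm1 d b E + 1 - j ≤ m →
      bta d b * oCnt d b E j + Tsum d b E j ≤ j * Bcap d b := by
    intro m
    induction m with
    | zero =>
      intro j hj
      have h0 : Lm1 d b E < j := by omega
      rw [oCnt_high d b E j h0]
      have := Tsum_le d b E hd hdb j
      omega
    | succ m ih =>
      intro j hj
      rcases Nat.lt_or_ge (Lm1 d b E) j with hhigh | hle
      · rw [oCnt_high d b E j hhigh]
        have := Tsum_le d b E hd hdb j
        omega
      · have hspec := oCnt_spec d b E j hle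
        have hIH := ih (j+1) (by omega)
        have hFT := F_T d b E hd hdb j
        rcases le_or_gt (Fcnt d b E j + oCnt d b E (j+1)) b with hle2 | hgt
        · have : oCnt d b E j = 0 := by omega
          rw [this]
          have := Tsum_le d b E hd hdb j
          omega
        · have ho : oCnt d b E j + b = Fcnt d b E j + oCnt d b E (j+1) := by omega
          have hmul : bta d b * oCnt d b E j + bta d b * b
              = bta d b * Fcnt d b E j + bta d b * oCnt d b E (j+1) := by
            have := congrArg (fun x => bta d b * x) ho
            simp only [Nat.mul_add] at this
            omega
          have hBc : Bcap d b = bta d b * b := rfl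
          have hj1 : (j+1) * Bcap d b = j * Bcap d b + Bcap d b := by ring
          omega
  exact main _ j (le_refl _)

theorem oCnt_le (hs : 0 < s) (hd : 2 ≤ d) (hdb : d ≤ b)
    (hindeg : ∀ v : Fin s, {u | E u v}.ncard ≤ d) (j : ℕ) :
    oCnt d b E j ≤ d - 1 := by
  rcases Nat.lt_or_ge (Lm1 d b E) j with hhigh | hle
  · rw [oCnt_high d b E j hhigh]; omega
  · rcases Nat.eq_zero_or_pos j with hj0 | hjpos
    · subst hj0
      have htel := o_tel d b E hd hdb 0
      have hT0 : Tsum d b E 0 = 0 := by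
        unfold Tsum
        rw [Finset.filter_false_of_mem (fun v _ => by omega)]
        simp
      have hbta : 1 ≤ bta d b := Nat.le_add_left 1 _
      simp only [Nat.zero_mul] at htel
      have : oCnt d b E 0 = 0 := by nlinarith
      omega
    · -- there is a vertex of maximal block, so Tsum_ge applies
      have hne : (Finset.univ : Finset (Fin s)).Nonempty := by
        exact Finset.univ_nonempty_iff.mpr (Fin.pos_iff_nonempty.mp hs)
      obtain ⟨vm, _, hvm⟩ := Finset.exists_mem_eq_sup Finset.univ hne (blk d b E)
      have hex : ∃ v, j ≤ blk d b E v := ⟨vm, by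
        have : Lm1 d b E = blk d b E vm := hvm
        omega⟩
      have hge := Tsum_ge d b E hd hdb hindeg j hex
      have htel := o_tel d b E hd hdb j
      have hbta : 1 ≤ bta d b := Nat.le_add_left 1 _
      have hkey : bta d b * oCnt d b E j + 1 ≤ bta d b * d := by omega
      by_contra hc
      push_neg at hc
      have : d ≤ oCnt d b E j := by omega
      have : bta d b * d ≤ bta d b * oCnt d b E j := Nat.mul_le_mul_left _ this
      omega

theorem oCnt_le_F (hs : 0 < s) (hd : 2 ≤ d) (hdb : d ≤ b)
    (hindeg : ∀ v : Fin s, {u | E u v}.ncard ≤ d) (j : ℕ) :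
    oCnt d b E j ≤ Fcnt d b E j := by
  rcases Nat.lt_or_ge (Lm1 d b E) j with hhigh | hle
  · rw [oCnt_high d b E j hhigh]; omega
  · have hspec := oCnt_spec d b E j hle
    have := oCnt_le d b E hs hd hdb hindeg (j+1)
    omega



noncomputable def Sel (j : ℕ) : Finset (Fin s × Fin s) :=
  if h : oCnt d b E j ≤ Fcnt d b E j then (Finset.exists_subset_card_eq h).choose else ∅

theorem Sel_subset (j : ℕ) : Sel d b E j ⊆ FarP d b E j := by
  unfold Sel
  split_ifs with h
  · exact (Finset.exists_subset_card_eq h).choose_spec.1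
  · exact Finset.empty_subset _

theorem Sel_card (j : ℕ) (h : oCnt d b E j ≤ Fcnt d b E j) :
    (Sel d b E j).card = oCnt d b E j := by
  unfold Sel
  rw [dif_pos h]
  exact (Finset.exists_subset_card_eq h).choose_spec.2

theorem Sel_mem (j : ℕ) (u v : Fin s) (h : (u, v) ∈ Sel d b E j) :
    E u v ∧ blk d b E v = j ∧ blk d b E u + 2 ≤ j := by
  have := Sel_subset d b E j h
  simp only [FarP, Finset.mem_filter, Finset.mem_univ, true_and] at this
  exact this

noncomputable def nsub (u v : Fin s) : ℕ := blk d b E v - blk d b E u - 1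

noncomputable def PF : SubdivVert s → ℕ
  | .inl v => Nat.pair (blk d b E v) 0
  | .inr (u, v, k) =>
      if (u, v) ∈ Sel d b E (blk d b E v) then
        (if blk d b E u + k + 1 = blk d b E v - 1 then Nat.pair (blk d b E u + k + 1) 0
         else Nat.pair (blk d b E u + k + 1) (blk d b E v))
      else Nat.pair (blk d b E u + k + 1) (blk d b E v + 1)

theorem PF_inl (v : Fin s) : PF d b E (.inl v) = Nat.pair (blk d b E v) 0 := rfl

theorem PF_inr (u v : Fin s) (k : ℕ) :
    PF d b E (.inr (u, v, k)) =
      if (u, v) ∈ Sel d b E (blk d b E v) then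
        (if blk d b E u + k + 1 = blk d b E v - 1 then Nat.pair (blk d b E u + k + 1) 0
         else Nat.pair (blk d b E u + k + 1) (blk d b E v))
      else Nat.pair (blk d b E u + k + 1) (blk d b E v + 1) := rfl

/-- First candidate source part: the B-part one level below. -/
def cand1 (i : ℕ) : ℕ := Nat.pair (i.unpair.1 - 1) 0

/-- Second candidate source part: the chain part one level below. -/
def cand2 (i : ℕ) : ℕ :=
  Nat.pair (i.unpair.1 - 1) (if i.unpair.2 = 0 then i.unpair.1 + 1 else i.unpair.2)

theorem cand1_pair (a c : ℕ) : cand1 (Nat.pair a c) = Nat.pair (a - 1) 0 := by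
  unfold cand1; rw [Nat.unpair_pair]

theorem cand2_pair_zero (a : ℕ) : cand2 (Nat.pair a 0) = Nat.pair (a - 1) (a + 1) := by
  unfold cand2; rw [Nat.unpair_pair]; simp

theorem cand2_pair_pos (a c : ℕ) (hc : c ≠ 0) : cand2 (Nat.pair a c) = Nat.pair (a - 1) c := by
  unfold cand2; rw [Nat.unpair_pair]; simp [hc]

/-- Main structural lemma: every subdivision edge either stays inside a part or goes
exactly one level up, coming from one of (at most) two possible parts determined by
the target part. -/
theorem sedge_char (hacyc : ∀ v, ¬ Relation.TransGen E v v)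
    (x y : SubdivVert s) (hx : SValid E (nsub d b E) x) (hy : SValid E (nsub d b E) y)
    (hxy : SEdge E (nsub d b E) x y) :
    PF d b E x = PF d b E y ∨
    ((PF d b E y).unpair.1 = (PF d b E x).unpair.1 + 1 ∧
     (PF d b E y).unpair.1 ≤ Lm1 d b E ∧
     (PF d b E x = cand1 (PF d b E y) ∨ PF d b E x = cand2 (PF d b E y))) := by
  rcases x with u | ⟨u, v, k⟩ <;> rcases y with v' | ⟨u', v', k'⟩
  · -- inl u → inl v'
    obtain ⟨hE, hn⟩ := hxy
    have hle : blk d b E u ≤ blk d b E v' := blk_le_of_E d b E hacyc u v' hE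
    have hn' : blk d b E v' - blk d b E u - 1 = 0 := hn
    have hLm := blk_le_Lm1 d b E v'
    rcases eq_or_lt_of_le hle with heq | hlt
    · left
      rw [PF_inl, PF_inl, heq]
    · right
      rw [PF_inl, PF_inl, Nat.unpair_pair, Nat.unpair_pair, cand1_pair]
      exact ⟨by omega, by omega, Or.inl (by rw [Nat.pair_eq_pair]; omega)⟩
  · -- inl u → inr (u', v', k')
    obtain ⟨hu, hE, hk0, hnpos⟩ := hxy
    subst hu hk0
    have hgap : blk d b E u' + 2 ≤ blk d b E v' := by
      have h0 : 0 < blk d b E v' - blk d b E u' - 1 := hnpos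
      omega
    have hLm := blk_le_Lm1 d b E v'
    right
    rw [PF_inl, PF_inr]
    split_ifs with h1 h2 <;>
      rw [Nat.unpair_pair, Nat.unpair_pair, cand1_pair] <;>
      exact ⟨by omega, by omega, Or.inl (by rw [Nat.pair_eq_pair]; omega)⟩
  · -- inr (u, v, k) → inl v'
    obtain ⟨hv, hE, hkn⟩ := hxy
    subst hv
    obtain ⟨_, hkvalid⟩ := hx
    have hkn' : k + 1 = blk d b E v - blk d b E u - 1 := hkn
    have hgap : blk d b E u + 2 ≤ blk d b E v := by
      have hlt : k < blk d b E v - blk d b E u - 1 := hkvalid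
      omega
    have hℓx : blk d b E u + k + 1 = blk d b E v - 1 := by omega
    have hLm := blk_le_Lm1 d b E v
    right
    rw [PF_inl, PF_inr]
    split_ifs with h1
    · rw [Nat.unpair_pair, Nat.unpair_pair, cand1_pair]
      exact ⟨by omega, by omega, Or.inl (by rw [Nat.pair_eq_pair]; omega)⟩
    · rw [Nat.unpair_pair, Nat.unpair_pair, cand2_pair_zero]
      refine ⟨by omega, by omega, Or.inr ?_⟩
      rw [Nat.pair_eq_pair]
      omega
  · -- inr (u, v, k) → inr (u', v', k')
    obtain ⟨hu, hv, hE, hk, hkn⟩ := hxy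
    subst hu hv hk
    have hkn2 : k + 1 < blk d b E v' - blk d b E u' - 1 := hkn
    have hgap : blk d b E u' + 2 ≤ blk d b E v' := by omega
    have hLm := blk_le_Lm1 d b E v'
    right
    rw [PF_inr, PF_inr]
    split_ifs with h1 h2 h3 h4 h5
    · -- sel, x at root level: impossible since y is above x
      exact absurd rfl (by omega : ¬ (blk d b E u' + k + 1 = blk d b E u' + k + 1))
    · -- sel, x mid-chain, y lander
      rw [Nat.unpair_pair, Nat.unpair_pair, cand2_pair_zero]
      refine ⟨by omega, by omega, Or.inr ?_⟩
      rw [Nat.pair_eq_pair]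
      omega
    · exact absurd rfl (by omega : ¬ (blk d b E u' + k + 1 = blk d b E u' + k + 1))
    · -- sel, x mid-chain, y mid-chain
      rw [Nat.unpair_pair, Nat.unpair_pair,
        cand2_pair_pos _ _ (by omega : blk d b E v' ≠ 0)]
      refine ⟨by omega, by omega, Or.inr ?_⟩
      rw [Nat.pair_eq_pair]
      omega
    · -- unselected
      rw [Nat.unpair_pair, Nat.unpair_pair,
        cand2_pair_pos _ _ (by omega : blk d b E v' + 1 ≠ 0)]
      refine ⟨by omega, by omega, Or.inr ?_⟩
      rw [Nat.pair_eq_pair]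
      omega



theorem qedge_level (hacyc : ∀ v, ¬ Relation.TransGen E v v) (i j : ℕ)
    (h : QEdge E (nsub d b E) (PF d b E) i j) :
    (Nat.unpair j).1 = (Nat.unpair i).1 + 1 ∧ (Nat.unpair j).1 ≤ Lm1 d b E := by
  obtain ⟨hne, x, y, hx, hy, hxy, hPx, hPy⟩ := h
  rcases sedge_char d b E hacyc x y hx hy hxy with heq | ⟨h1, h2, _⟩
  · exact absurd (hPx ▸ hPy ▸ heq) hne
  · rw [hPx, hPy] at h1
    rw [hPy] at h2
    exact ⟨h1, h2⟩

theorem qedge_indeg (hacyc : ∀ v, ¬ Relation.TransGen E v v) (i : ℕ) :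
    {j | QEdge E (nsub d b E) (PF d b E) j i}.ncard ≤ 2 := by
  have hsub : {j | QEdge E (nsub d b E) (PF d b E) j i} ⊆ {cand1 i, cand2 i} := by
    intro j hj
    obtain ⟨hne, x, y, hx, hy, hxy, hPx, hPy⟩ := hj
    rcases sedge_char d b E hacyc x y hx hy hxy with heq | ⟨_, _, hc⟩
    · exact absurd (hPx ▸ hPy ▸ heq) hne
    · rcases hc with hc | hc
      · left; rw [← hPx, ← hPy]; exact hc
      · right; rw [← hPx, ← hPy]; exact hc
  calc {j | QEdge E (nsub d b E) (PF d b E) j i}.ncard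
      ≤ ({cand1 i, cand2 i} : Set ℕ).ncard :=
        Set.ncard_le_ncard hsub (Set.Finite.insert _ (Set.finite_singleton _))
    _ ≤ 2 := by
        have h1 := Set.ncard_insert_le (cand1 i) ({cand2 i} : Set ℕ)
        simpa using h1

theorem chain_bound (hacyc : ∀ v, ¬ Relation.TransGen E v v) :
    ∀ (l : List ℕ) (a : ℕ), l ≠ [] →
      List.Chain (QEdge E (nsub d b E) (PF d b E)) a l →
      l.length + (Nat.unpair a).1 ≤ Lm1 d b E := by
  intro l
  induction l with
  | nil => intro a h; exact absurd rfl h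
  | cons b0 t ih =>
    intro a _ hch
    simp only [List.Chain, List.isChain_cons_cons] at hch
    obtain ⟨hR, hch'⟩ := hch
    obtain ⟨hlev, hle⟩ := qedge_level d b E hacyc a b0 hR
    rcases List.eq_nil_or_concat t with ht | _
    · subst ht
      simp only [List.length_cons, List.length_nil]
      omega
    · rcases t with _ | ⟨c, t'⟩
      · simp only [List.length_cons, List.length_nil]
        omega
      · have := ih b0 (by simp) hch'
        simp only [List.length_cons] at this ⊢
        omega

/-- Level of a subdivision-vertex part. -/
theorem PF_inr_level (u v : Fin s) (k : ℕ) :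
    (PF d b E (.inr (u, v, k))).unpair.1 = blk d b E u + k + 1 := by
  rw [PF_inr]
  split_ifs <;> rw [Nat.unpair_pair]

theorem Fcnt_high (j : ℕ) (h : Lm1 d b E < j) : Fcnt d b E j = 0 := by
  unfold Fcnt
  rw [Finset.card_eq_zero]
  rw [Finset.eq_empty_iff_forall_notMem]
  intro p hp
  simp only [FarP, Finset.mem_filter, Finset.mem_univ, true_and] at hp
  have := blk_le_Lm1 d b E p.2
  omega

theorem part_size (hacyc : ∀ v, ¬ Relation.TransGen E v v) (hs : 0 < s)
    (hd : 2 ≤ d) (hdb : d ≤ b) (hindeg : ∀ v : Fin s, {u | E u v}.ncard ≤ d) (i : ℕ) :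
    {x | SValid E (nsub d b E) x ∧ PF d b E x = i}.ncard ≤ b := by
  classical
  set S : Set (SubdivVert s) := {x | SValid E (nsub d b E) x ∧ PF d b E x = i} with hS
  set g : SubdivVert s → Fin s × Fin s := fun x =>
    match x with
    | .inl v => (v, v)
    | .inr (u, v, _) => (u, v) with hg
  have hinj : Set.InjOn g S := by
    intro x hx y hy hxy
    rcases x with v1 | ⟨u1, v1, k1⟩ <;> rcases y with v2 | ⟨u2, v2, k2⟩
    · simp only [hg, Prod.mk.injEq] at hxy
      rw [hxy.1]
    · exfalso
      simp only [hg, Prod.mk.injEq] at hxy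
      obtain ⟨he1, he2⟩ := hxy
      obtain ⟨hE2, _⟩ := hy.1
      exact hacyc v1 (Relation.TransGen.single (by rw [← he1, ← he2] at hE2; exact hE2))
    · exfalso
      simp only [hg, Prod.mk.injEq] at hxy
      obtain ⟨he1, he2⟩ := hxy
      obtain ⟨hE2, _⟩ := hx.1
      exact hacyc v2 (Relation.TransGen.single (by rw [he1, he2] at hE2; exact hE2))
    · simp only [hg, Prod.mk.injEq] at hxy
      obtain ⟨he1, he2⟩ := hxy
      subst he1; subst he2
      have h1 : (PF d b E (.inr (u1, v1, k1))).unpair.1 = blk d b E u1 + k1 + 1 :=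
        PF_inr_level d b E u1 v1 k1
      have h2 : (PF d b E (.inr (u1, v1, k2))).unpair.1 = blk d b E u1 + k2 + 1 :=
        PF_inr_level d b E u1 v1 k2
      have hx2 := hx.2
      have hy2 := hy.2
      rw [hx2] at h1
      rw [hy2] at h2
      have : k1 = k2 := by omega
      rw [this]
  -- the target finset
  set ℓ : ℕ := (Nat.unpair i).1 with hℓ
  set r : ℕ := (Nat.unpair i).2 with hr
  have hi : i = Nat.pair ℓ r := (Nat.pair_unpair i).symm
  by_cases hr0 : r = 0
  · -- B-part: original vertices of class ℓ plus landers of selected edges into class ℓ+1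
    have hsub : g '' S ⊆ ↑(((classF d b E ℓ).image (fun v => (v, v))) ∪ Sel d b E (ℓ+1)) := by
      rintro p ⟨x, hxS, rfl⟩
      obtain ⟨hval, hPx⟩ := hxS
      rcases x with v | ⟨u, v, k⟩
      · simp only [Finset.coe_union, Set.mem_union]
        left
        simp only [Finset.coe_image, Set.mem_image, Finset.mem_coe]
        refine ⟨v, ?_, rfl⟩
        simp only [classF, Finset.mem_filter, Finset.mem_univ, true_and]
        rw [PF_inl, hi, hr0] at hPx
        exact (Nat.pair_eq_pair.mp hPx).1
      · simp only [Finset.coe_union, Set.mem_union]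
        right
        obtain ⟨hE, hkv⟩ := hval
        have hgap : blk d b E u + 2 ≤ blk d b E v := by
          have : k < blk d b E v - blk d b E u - 1 := hkv
          omega
        rw [PF_inr] at hPx
        rw [hi, hr0] at hPx
        split_ifs at hPx with h1 h2
        · -- selected lander
          rw [Nat.pair_eq_pair] at hPx
          have hbv : blk d b E v = ℓ + 1 := by omega
          rw [Finset.mem_coe, ← hbv]
          exact h1
        · rw [Nat.pair_eq_pair] at hPx
          omega
        · rw [Nat.pair_eq_pair] at hPx
          omega
    have hcard : (((classF d b E ℓ).image (fun v => (v, v))) ∪ Sel d b E (ℓ+1)).card ≤ b := by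
      calc (((classF d b E ℓ).image (fun v => (v, v))) ∪ Sel d b E (ℓ+1)).card
          ≤ ((classF d b E ℓ).image (fun v => (v, v))).card + (Sel d b E (ℓ+1)).card :=
            Finset.card_union_le _ _
        _ ≤ (classF d b E ℓ).card + (Sel d b E (ℓ+1)).card := by
            have := Finset.card_image_le (s := classF d b E ℓ) (f := fun v => (v, v))
            omega
        _ ≤ bta d b + (d - 1) := by
            have h1 := classF_card d b E hd hdb ℓ
            have h2 : (Sel d b E (ℓ+1)).card = oCnt d b E (ℓ+1) :=
              Sel_card d b E (ℓ+1) (oCnt_le_F d b E hs hd hdb hindeg (ℓ+1))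
            have h3 := oCnt_le d b E hs hd hdb hindeg (ℓ+1)
            omega
        _ ≤ b := by
            show b - d + 1 + (d - 1) ≤ b
            omega
    calc S.ncard = (g '' S).ncard := (Set.ncard_image_of_injOn hinj).symm
      _ ≤ b := le_trans (Set.ncard_le_ncard hsub (Finset.finite_toSet _))
          (by rw [Set.ncard_coe_finset]; exact hcard)
  · -- chain part (level ℓ, carrying block r-1's own edges and block r's overflow)
    have hsub : g '' S ⊆ ↑((FarP d b E (r-1) \ Sel d b E (r-1)) ∪ Sel d b E r) := by
      rintro p ⟨x, hxS, rfl⟩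
      obtain ⟨hval, hPx⟩ := hxS
      rcases x with v | ⟨u, v, k⟩
      · exfalso
        rw [PF_inl, hi] at hPx
        rw [Nat.pair_eq_pair] at hPx
        exact hr0 hPx.2.symm
      · obtain ⟨hE, hkv⟩ := hval
        have hgap : blk d b E u + 2 ≤ blk d b E v := by
          have : k < blk d b E v - blk d b E u - 1 := hkv
          omega
        rw [PF_inr] at hPx
        rw [hi] at hPx
        simp only [Finset.coe_union, Set.mem_union, Finset.coe_sdiff, Set.mem_diff]
        split_ifs at hPx with h1 h2
        · rw [Nat.pair_eq_pair] at hPx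
          omega
        · -- selected, mid-chain: overflow of block (blk v) = r
          rw [Nat.pair_eq_pair] at hPx
          right
          rw [Finset.mem_coe]
          have hbv : blk d b E v = r := hPx.2
          rw [← hbv]
          exact h1
        · -- unselected: own edge of block (blk v) = r - 1
          rw [Nat.pair_eq_pair] at hPx
          left
          have hbv : blk d b E v = r - 1 := by omega
          constructor
          · rw [Finset.mem_coe]
            simp only [FarP, Finset.mem_filter, Finset.mem_univ, true_and]
            exact ⟨hE, hbv, by show blk d b E u + 2 ≤ r - 1; omega⟩
          · rw [Finset.mem_coe, ← hbv]
            exact h1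
    have hcard : ((FarP d b E (r-1) \ Sel d b E (r-1)) ∪ Sel d b E r).card ≤ b := by
      have hsel1 : (Sel d b E (r-1)).card = oCnt d b E (r-1) :=
        Sel_card d b E (r-1) (oCnt_le_F d b E hs hd hdb hindeg (r-1))
      have hselr : (Sel d b E r).card = oCnt d b E r :=
        Sel_card d b E r (oCnt_le_F d b E hs hd hdb hindeg r)
      have hsd : (FarP d b E (r-1) \ Sel d b E (r-1)).card
          = Fcnt d b E (r-1) - oCnt d b E (r-1) := by
        rw [Finset.card_sdiff_of_subset (Sel_subset d b E (r-1))]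
        rw [hsel1]
        rfl
      have hkey : Fcnt d b E (r-1) + oCnt d b E r ≤ b + oCnt d b E (r-1) := by
        rcases Nat.lt_or_ge (Lm1 d b E) (r-1) with hhigh | hle
        · have hF := Fcnt_high d b E (r-1) hhigh
          have ho1 := oCnt_high d b E r (by omega)
          omega
        · have := oCnt_spec d b E (r-1) hle
          have hreq : r - 1 + 1 = r := by omega
          rw [hreq] at this
          omega
      calc ((FarP d b E (r-1) \ Sel d b E (r-1)) ∪ Sel d b E r).card
          ≤ (FarP d b E (r-1) \ Sel d b E (r-1)).card + (Sel d b E r).card :=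
            Finset.card_union_le _ _
        _ ≤ b := by
            rw [hsd, hselr]
            have hoF := oCnt_le_F d b E hs hd hdb hindeg (r-1)
            omega
    calc S.ncard = (g '' S).ncard := (Set.ncard_image_of_injOn hinj).symm
      _ ≤ b := le_trans (Set.ncard_le_ncard hsub (Finset.finite_toSet _))
          (by rw [Set.ncard_coe_finset]; exact hcard)



theorem Lm1_bound (hs : 0 < s) (hd : 2 ≤ d) (hdb : d ≤ b)
    (hindeg : ∀ v : Fin s, {u | E u v}.ncard ≤ d) :
    Lm1 d b E * b < d * s := by
  classical
  have hne : (Finset.univ : Finset (Fin s)).Nonempty :=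
    Finset.univ_nonempty_iff.mpr (Fin.pos_iff_nonempty.mp hs)
  obtain ⟨vm, _, hvm⟩ := Finset.exists_mem_eq_sup Finset.univ hne (blk d b E)
  have h1 : Lm1 d b E * Bcap d b ≤ sig d b E vm - 1 := by
    have : Lm1 d b E = (sig d b E vm - 1) / Bcap d b := hvm
    rw [this]
    exact Nat.div_mul_le_self _ _
  have h2 : 1 ≤ sig d b E vm := one_le_sig d b E (by omega) vm
  have h3 : sig d b E vm ≤ ∑ v ∈ Finset.univ, W d b E v :=
    Finset.sum_le_sum_of_subset (Finset.filter_subset _ _)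
  have h4 : ∑ v ∈ Finset.univ, W d b E v ≤ s * (bta d b * d) := by
    calc ∑ v ∈ Finset.univ, W d b E v
        ≤ (Finset.univ : Finset (Fin s)).card • (bta d b * d) :=
          Finset.sum_le_card_nsmul _ _ _ (fun v _ => W_le d b E hd hdb hindeg v)
      _ = s * (bta d b * d) := by
          rw [smul_eq_mul, Finset.card_univ, Fintype.card_fin]
  have h5 : Lm1 d b E * (bta d b * b) < s * (bta d b * d) := by
    have hBc : Bcap d b = bta d b * b := rfl
    rw [hBc] at h1
    omega
  have h6 : (Lm1 d b E * b) * bta d b < (d * s) * bta d b := by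
    calc (Lm1 d b E * b) * bta d b = Lm1 d b E * (bta d b * b) := by ring
      _ < s * (bta d b * d) := h5
      _ = (d * s) * bta d b := by ring
  exact Nat.lt_of_mul_lt_mul_right h6

end Construction

/-- Low-degree DAG partition lemma, simplified (`d' = 2`): every DAG on `s` vertices
with max in-degree `d` admits a subdivision and a partition with parts of size at most `b`,
quotient in-degree at most `2`, and all quotient paths of fewer than `d·s/b` edges. -/
theorem stmt8 (s d b : ℕ) (hd : 2 ≤ d) (hdb : d ≤ b) (hbs : b ≤ s)
    (E : Fin s → Fin s → Prop)
    (hacyc : ∀ v, ¬ Relation.TransGen E v v)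
    (hindeg : ∀ v : Fin s, {u | E u v}.ncard ≤ d) :
    ∃ (n : Fin s → Fin s → ℕ) (P : SubdivVert s → ℕ),
      (∀ i, {x | SValid E n x ∧ P x = i}.ncard ≤ b) ∧
      (∀ i, {j | QEdge E n P j i}.ncard ≤ 2) ∧
      (∀ p : List ℕ, p.Chain' (QEdge E n P) →
        ((p.length : ℚ) - 1 < ((d : ℚ) * (s : ℚ)) / (b : ℚ))) := by
  have hs : 0 < s := by omega
  refine ⟨nsub d b E, PF d b E, ?_, ?_, ?_⟩
  · exact fun i => part_size d b E hacyc hs hd hdb hindeg i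
  · exact fun i => qedge_indeg d b E hacyc i
  · intro p hp
    have hbQ : (0:ℚ) < (b:ℚ) := by
      have : 0 < b := by omega
      exact_mod_cast this
    have hpos : (0:ℚ) < (d : ℚ) * (s : ℚ) / (b : ℚ) := by
      apply div_pos _ hbQ
      have h1 : 0 < d * s := by positivity
      exact_mod_cast h1
    have hLmQ : (Lm1 d b E : ℚ) < (d : ℚ) * (s : ℚ) / (b : ℚ) := by
      rw [lt_div_iff₀ hbQ]
      have := Lm1_bound d b E hs hd hdb hindeg
      exact_mod_cast this
    rcases p with _ | ⟨a, l⟩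
    · simp only [List.length_nil, Nat.cast_zero]
      linarith
    · have hc : List.Chain (QEdge E (nsub d b E) (PF d b E)) a l := hp
      rcases List.eq_nil_or_concat l with hl | _
      · subst hl
        simp only [List.length_cons, List.length_nil, Nat.cast_one]
        linarith
      · rcases l with _ | ⟨b0, t⟩
        · simp only [List.length_cons, List.length_nil, Nat.cast_one]
          linarith
        · have hbd := chain_bound d b E hacyc (b0 :: t) a (by simp) hc
          have hlen : ((b0 :: t).length : ℚ) ≤ (Lm1 d b E : ℚ) := by
            have : (b0 :: t).length ≤ Lm1 d b E := by omega
            exact_mod_cast this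
          have : ((a :: b0 :: t).length : ℚ) - 1 = ((b0 :: t).length : ℚ) := by
            simp only [List.length_cons]
            push_cast
            ring
          rw [this]
          linarith
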